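/- The relation ≼ is a partial order on T-atoms up to a.e. equality: for all T-atoms A, B, C, (reflexivity) A ⊆ F(A) a.e.; (transitivity) if A ⊆ F(B) a.e. and B ⊆ F(C) a.e. then A ⊆ F(C) a.e.; (antisymmetry) if A ⊆ F(B) a.e. and B ⊆ F(A) a.e. then A = B a.e. -/

import Mathlib

open MeasureTheory ENNReal Filter Set

noncomputable section

namespace PaperAtoms

variable {Ω : Type*} [MeasurableSpace Ω] {μ : MeasureTheory.Measure Ω} {p : ℝ≥0∞} [Fact (1 ≤ p)]

/-- `T` is a positive operator on `Lp`. -/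
def IsPositiveOp (T : Lp ℝ p μ →L[ℝ] Lp ℝ p μ) : Prop :=
  ∀ f : Lp ℝ p μ, 0 ≤ f → 0 ≤ T f

/-- A measurable set `A` is `T`-invariant if `T f` vanishes a.e. on `Aᶜ` for every
nonnegative `f ∈ Lp` vanishing a.e. on `Aᶜ`. -/
def Invariant (T : Lp ℝ p μ →L[ℝ] Lp ℝ p μ) (A : Set Ω) : Prop :=
  MeasurableSet A ∧
    ∀ f : Lp ℝ p μ, 0 ≤ f → (∀ᵐ x ∂μ, x ∉ A → f x = 0) → ∀ᵐ x ∂μ, x ∉ A → T f x = 0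

/-- `A` is `T`-co-invariant if `Aᶜ` is `T`-invariant. -/
def CoInvariant (T : Lp ℝ p μ →L[ℝ] Lp ℝ p μ) (A : Set Ω) : Prop :=
  Invariant T Aᶜ

/-- `A` is `T`-admissible if it belongs to the σ-field generated by the `T`-invariant sets. -/
def Admissible (T : Lp ℝ p μ →L[ℝ] Lp ℝ p μ) (A : Set Ω) : Prop :=
  MeasurableSet[MeasurableSpace.generateFrom {B : Set Ω | Invariant T B}] A

/-- A `T`-atom is a minimal `T`-admissible set with positive measure. -/
def Atom (T : Lp ℝ p μ →L[ℝ] Lp ℝ p μ) (A : Set Ω) : Prop :=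
  Admissible T A ∧ 0 < μ A ∧
    ∀ B : Set Ω, Admissible T B → B ≤ᵐ[μ] A → μ B = 0 ∨ B =ᵐ[μ] A

/-- `FA` is (a version of) the future of `A`: the minimal `T`-invariant set containing `A` a.e. -/
def IsFuture (T : Lp ℝ p μ →L[ℝ] Lp ℝ p μ) (A FA : Set Ω) : Prop :=
  Invariant T FA ∧ A ≤ᵐ[μ] FA ∧
    ∀ B : Set Ω, Invariant T B → A ≤ᵐ[μ] B → FA ≤ᵐ[μ] B

/-- `PA` is (a version of) the past of `A`: the minimal `T`-co-invariant set containing `A` a.e. -/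
def IsPast (T : Lp ℝ p μ →L[ℝ] Lp ℝ p μ) (A PA : Set Ω) : Prop :=
  CoInvariant T PA ∧ A ≤ᵐ[μ] PA ∧
    ∀ B : Set Ω, CoInvariant T B → A ≤ᵐ[μ] B → PA ≤ᵐ[μ] B

/-- `A` is `T`-convex if `A = F(A) ∩ P(A)` a.e. -/
def Convexe (T : Lp ℝ p μ →L[ℝ] Lp ℝ p μ) (A : Set Ω) : Prop :=
  MeasurableSet A ∧
    ∃ FA PA : Set Ω, IsFuture T A FA ∧ IsPast T A PA ∧ A =ᵐ[μ] (FA ∩ PA : Set Ω)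

/-- Multiplication by the indicator function of `A`, as a bounded operator on `Lp`
(defined as `0` if `A` is not measurable). -/
def indicatorCLM (μ : MeasureTheory.Measure Ω) (p : ℝ≥0∞) [Fact (1 ≤ p)] (A : Set Ω) :
    Lp ℝ p μ →L[ℝ] Lp ℝ p μ := by
  classical
  exact if hA : MeasurableSet A then
    LinearMap.mkContinuous
      { toFun := fun f => ((Lp.memLp f).indicator hA).toLp (A.indicator f)
        map_add' := fun f g => by
          rw [← MemLp.toLp_add]
          refine MemLp.toLp_congr _ _ ?_
          filter_upwards [Lp.coeFn_add f g] with x hx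
          simp only [Pi.add_apply, Set.indicator_apply, hx]
          split <;> simp
        map_smul' := fun c f => by
          rw [RingHom.id_apply, ← MemLp.toLp_const_smul]
          refine MemLp.toLp_congr _ _ ?_
          filter_upwards [Lp.coeFn_smul c f] with x hx
          simp only [Pi.smul_apply, Set.indicator_apply, hx, smul_eq_mul]
          split <;> simp }
      1
      (fun f => by
        simp only [LinearMap.coe_mk, AddHom.coe_mk, one_mul]
        rw [Lp.norm_toLp, Lp.norm_def]
        exact ENNReal.toReal_mono (Lp.eLpNorm_ne_top f) (eLpNorm_indicator_le _))
  else 0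

/-- The restriction `T_A = 1_A T 1_A` of `T` to a measurable set `A`. -/
def restrictOp (T : Lp ℝ p μ →L[ℝ] Lp ℝ p μ) (A : Set Ω) : Lp ℝ p μ →L[ℝ] Lp ℝ p μ :=
  (indicatorCLM μ p A).comp (T.comp (indicatorCLM μ p A))

/-- The spectral radius of a bounded operator, via Gelfand's formula
`ρ(T) = inf_n ‖Tⁿ‖^(1/n) = lim_n ‖Tⁿ‖^(1/n)`. -/
def specRadius (T : Lp ℝ p μ →L[ℝ] Lp ℝ p μ) : ℝ :=
  ⨅ n : ℕ, ‖T ^ (n + 1)‖ ^ (((n : ℝ) + 1)⁻¹)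

/-- The spectral radius `ρ(A)` of the restriction of `T` to `A`. -/
def rhoSet (T : Lp ℝ p μ →L[ℝ] Lp ℝ p μ) (A : Set Ω) : ℝ :=
  specRadius (restrictOp T A)

/-- A measurable set `A` with `μ A > 0` is `T`-irreducible if the restriction of `T` to `A`
is irreducible, i.e. every `T_A`-invariant subset of `A` is a.e. trivial. -/
def Irreducible (T : Lp ℝ p μ →L[ℝ] Lp ℝ p μ) (A : Set Ω) : Prop :=
  MeasurableSet A ∧ 0 < μ A ∧
    ∀ B : Set Ω, Invariant (restrictOp T A) B → B ≤ᵐ[μ] A → μ B = 0 ∨ B =ᵐ[μ] A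

/-- `T` is power compact if some power `T^k`, `k ≥ 1`, is a compact operator. -/
def PowerCompact (T : Lp ℝ p μ →L[ℝ] Lp ℝ p μ) : Prop :=
  ∃ k : ℕ, 1 ≤ k ∧ IsCompactOperator (⇑(T ^ k))

/-- `B ≼ A` for atoms: `B ⊆ F(A)` a.e. -/
def Prec (T : Lp ℝ p μ →L[ℝ] Lp ℝ p μ) (B A : Set Ω) : Prop :=
  ∃ FA : Set Ω, IsFuture T A FA ∧ B ≤ᵐ[μ] FA

/-- `B ≺ A` for atoms: `B ⊆ F(A)` a.e. and `B ≠ A` a.e. -/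
def PrecStrict (T : Lp ℝ p μ →L[ℝ] Lp ℝ p μ) (B A : Set Ω) : Prop :=
  Prec T B A ∧ ¬ (B =ᵐ[μ] A)

/-- A critical atom: a `T`-atom whose spectral radius equals that of `T`. -/
def CriticalAtom (T : Lp ℝ p μ →L[ℝ] Lp ℝ p μ) (A : Set Ω) : Prop :=
  Atom T A ∧ rhoSet T A = specRadius T

/-- There is a chain `A = A_0 ≻ A_1 ≻ ⋯ ≻ A_n` of critical atoms starting at `A`. -/
def ChainFrom (T : Lp ℝ p μ →L[ℝ] Lp ℝ p μ) (A : Set Ω) (n : ℕ) : Prop :=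
  ∃ c : ℕ → Set Ω, c 0 = A ∧ (∀ i ≤ n, CriticalAtom T (c i)) ∧
    ∀ i < n, PrecStrict T (c (i + 1)) (c i)

/-- The generalized eigenspace `⋃ₖ ker (T - λ id)^k` of `T` at `λ`. -/
def genEigenspace (T : Lp ℝ p μ →L[ℝ] Lp ℝ p μ) (l : ℝ) : Submodule ℝ (Lp ℝ p μ) :=
  ⨆ k : ℕ, LinearMap.ker (((T - l • (1 : Lp ℝ p μ →L[ℝ] Lp ℝ p μ)) ^ k) : Lp ℝ p μ →ₗ[ℝ] Lp ℝ p μ)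

/-- The algebraic multiplicity of `λ` for `T`. -/
def algMult (T : Lp ℝ p μ →L[ℝ] Lp ℝ p μ) (l : ℝ) : ℕ :=
  Module.finrank ℝ ↥(genEigenspace T l)

/-- The set of `k` at which the kernels of `(T - ρ(T) id)^k` stabilize; the ascent of `T`
at `ρ(T)` is its infimum. -/
def ascentSet (T : Lp ℝ p μ →L[ℝ] Lp ℝ p μ) : Set ℕ :=
  {k : ℕ | LinearMap.ker (((T - specRadius T • (1 : Lp ℝ p μ →L[ℝ] Lp ℝ p μ)) ^ k) : Lp ℝ p μ →ₗ[ℝ] Lp ℝ p μ)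
      = LinearMap.ker (((T - specRadius T • (1 : Lp ℝ p μ →L[ℝ] Lp ℝ p μ)) ^ (k + 1)) : Lp ℝ p μ →ₗ[ℝ] Lp ℝ p μ)}

/-- `D` is (a version of) the set `T(C)`, i.e. the support of `T(1_C f)` for any a.e.
positive `f ∈ Lp`. -/
def IsImage (T : Lp ℝ p μ →L[ℝ] Lp ℝ p μ) (C D : Set Ω) : Prop :=
  MeasurableSet C ∧ MeasurableSet D ∧
    ∀ f : Lp ℝ p μ, (∀ᵐ x ∂μ, 0 < f x) →
      D =ᵐ[μ] ({x | T (indicatorCLM μ p C f) x ≠ 0} : Set Ω)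

/-- `D` is (a version of) the `k`-fold iterated image `T^k(C)`. -/
def IsIterImage (T : Lp ℝ p μ →L[ℝ] Lp ℝ p μ) : ℕ → Set Ω → Set Ω → Prop
  | 0, C, D => D = C
  | (k + 1), C, D => ∃ E : Set Ω, IsIterImage T k C E ∧ IsImage T E D

variable {Ω : Type*} [MeasurableSpace Ω] {μ : MeasureTheory.Measure Ω} {p : ℝ≥0∞}

/-- Atom dichotomy: an atom is a.e. contained in, or a.e. disjoint from,
every admissible set. -/
theorem atom_dichotomy {Ω : Type*} [MeasurableSpace Ω] {μ : MeasureTheory.Measure Ω}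
    {p : ℝ≥0∞} [Fact (1 ≤ p)] {T : Lp ℝ p μ →L[ℝ] Lp ℝ p μ} {A : Set Ω}
    (hA : Atom T A) {S : Set Ω} (hS : Admissible T S) :
    μ (A ∩ S) = 0 ∨ A ≤ᵐ[μ] S := by
  have hAS : Admissible T (A ∩ S) := hA.1.inter hS
  have hle : (A ∩ S : Set Ω) ≤ᵐ[μ] A :=
    HasSubset.Subset.eventuallyLE (Set.inter_subset_left)
  rcases hA.2.2 _ hAS hle with h | h
  · exact Or.inl h
  · right
    rw [ae_le_set]
    have := (ae_eq_set.mp h).2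
    rwa [Set.diff_self_inter] at this

theorem statement14 [SigmaFinite μ] (hμ : μ Set.univ ≠ 0) [Fact (1 ≤ p)]
    (hp : 1 < p) (hp' : p ≠ ∞)
    (T : Lp ℝ p μ →L[ℝ] Lp ℝ p μ) (hT : IsPositiveOp T) :
    (∀ A FA : Set Ω, Atom T A → IsFuture T A FA → A ≤ᵐ[μ] FA) ∧
    (∀ A B C FB FC : Set Ω, Atom T A → Atom T B → Atom T C →
      IsFuture T B FB → IsFuture T C FC → A ≤ᵐ[μ] FB → B ≤ᵐ[μ] FC → A ≤ᵐ[μ] FC) ∧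
    (∀ A B FA FB : Set Ω, Atom T A → Atom T B → IsFuture T A FA → IsFuture T B FB →
      A ≤ᵐ[μ] FB → B ≤ᵐ[μ] FA → A =ᵐ[μ] B) := by
  refine ⟨fun A FA _ hFA => hFA.2.1, ?_, ?_⟩
  · -- transitivity
    intro A B C FB FC _ _ _ hFB hFC hAB hBC
    exact hAB.trans (hFB.2.2 FC hFC.1 hBC)
  · -- antisymmetry
    intro A B FA FB hA hB hFA hFB hAFB hBFA
    -- `A` and `B` are a.e. contained in exactly the same admissible sets.
    have key : ∀ S : Set Ω, Admissible T S → (A ≤ᵐ[μ] S ↔ B ≤ᵐ[μ] S) := by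
      intro S hS
      -- dichotomy in a convenient form
      have dichA : ∀ U : Set Ω, Admissible T U → ¬ A ≤ᵐ[μ] U → μ (A ∩ U) = 0 :=
        fun U hU h => (atom_dichotomy hA hU).resolve_right h
      have dichB : ∀ U : Set Ω, Admissible T U → ¬ B ≤ᵐ[μ] U → μ (B ∩ U) = 0 :=
        fun U hU h => (atom_dichotomy hB hU).resolve_right h
      have hposA : μ A ≠ 0 := hA.2.1.ne'
      have hposB : μ B ≠ 0 := hB.2.1.ne'
      -- if an atom is a.e. inside U, it is not a.e. disjoint from U
      have not_both : ∀ (X U : Set Ω), μ X ≠ 0 → X ≤ᵐ[μ] U → μ (X ∩ U) ≠ 0 := by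
        intro X U hX hle h0
        apply hX
        have h1 : μ (X \ U) = 0 := ae_le_set.mp hle
        have : μ X ≤ μ (X \ U) + μ (X ∩ U) := by
          conv_lhs => rw [← Set.diff_union_inter X U]
          exact measure_union_le _ _
        simpa [h1, h0] using this
      revert hS
      refine MeasurableSpace.generateFrom_induction
        (C := {B : Set Ω | Invariant T B})
        (p := fun S _ => (A ≤ᵐ[μ] S ↔ B ≤ᵐ[μ] S)) ?_ ?_ ?_ ?_ S
      · -- invariant generators
        intro U hU _
        constructor
        · intro hAU
          exact hBFA.trans (hFA.2.2 U hU hAU)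
        · intro hBU
          exact hAFB.trans (hFB.2.2 U hU hBU)
      · -- empty set
        constructor
        · intro h
          exact absurd (by simpa using ae_le_set.mp h) hposA
        · intro h
          exact absurd (by simpa using ae_le_set.mp h) hposB
      · -- complements
        intro U hU ih
        change A ≤ᵐ[μ] (Uᶜ : Set Ω) ↔ B ≤ᵐ[μ] (Uᶜ : Set Ω)
        have hU' : Admissible T U := hU
        have hcA : A ≤ᵐ[μ] (Uᶜ : Set Ω) ↔ ¬ A ≤ᵐ[μ] U := by
          constructor
          · intro h1 h2
            refine not_both A U hposA h2 ?_
            have := ae_le_set.mp h1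
            rwa [Set.diff_compl] at this
          · intro h2
            rw [ae_le_set, Set.diff_compl]
            exact dichA U hU' h2
        have hcB : B ≤ᵐ[μ] (Uᶜ : Set Ω) ↔ ¬ B ≤ᵐ[μ] U := by
          constructor
          · intro h1 h2
            refine not_both B U hposB h2 ?_
            have := ae_le_set.mp h1
            rwa [Set.diff_compl] at this
          · intro h2
            rw [ae_le_set, Set.diff_compl]
            exact dichB U hU' h2
        rw [hcA, hcB, ih]
      · -- countable unions
        intro f hf ih
        have hf' : ∀ n, Admissible T (f n) := hf
        constructor
        · intro hAU
          have : ∃ n, μ (A ∩ f n) ≠ 0 := by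
            by_contra hcon
            push_neg at hcon
            refine not_both A _ hposA hAU ?_
            rw [Set.inter_iUnion]
            exact measure_iUnion_null hcon
          obtain ⟨n, hn⟩ := this
          have hAn : A ≤ᵐ[μ] f n := by
            by_contra h
            exact hn (dichA (f n) (hf' n) h)
          exact ((ih n).mp hAn).trans
            (HasSubset.Subset.eventuallyLE (Set.subset_iUnion f n))
        · intro hBU
          have : ∃ n, μ (B ∩ f n) ≠ 0 := by
            by_contra hcon
            push_neg at hcon
            refine not_both B _ hposB hBU ?_
            rw [Set.inter_iUnion]
            exact measure_iUnion_null hcon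
          obtain ⟨n, hn⟩ := this
          have hBn : B ≤ᵐ[μ] f n := by
            by_contra h
            exact hn (dichB (f n) (hf' n) h)
          exact ((ih n).mpr hBn).trans
            (HasSubset.Subset.eventuallyLE (Set.subset_iUnion f n))
    have h1 : A ≤ᵐ[μ] B :=
      (key B hB.1).mpr (HasSubset.Subset.eventuallyLE (subset_refl B))
    have h2 : B ≤ᵐ[μ] A :=
      (key A hA.1).mp (HasSubset.Subset.eventuallyLE (subset_refl A))
    exact h1.antisymm h2


end PaperAtoms
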